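/- Let p be a prime divisor of n, let n' = n/p, and let S = (x_1, …, x_k) be a sequence in Z_n such that each x_i is the image of p·y_i under the map Z_{n'} → Z_n sending y + n'Z to py + nZ, for some sequence S' = (y_1, …, y_k) in Z_{n'} (i.e., every term of S is divisible by p and S' is obtained by dividing the terms of S by p). If S' is a U(n')-weighted zero-sum sequence in Z_{n'}, then S is a U(n)-weighted zero-sum sequence in Z_n; and if S' is a U(n')^2-weighted zero-sum sequence in Z_{n'}, then S is a U(n)^2-weighted zero-sum sequence in Z_n. -/

import Mathlib

/-- A list `L` over `ZMod n` is an `A`-weighted zero-sum sequence if there are weights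
`a₁, …, a_k ∈ A` (one per term) with `a₁x₁ + ⋯ + a_kx_k = 0`. -/
def IsWeightedZeroSum {n : ℕ} (A : Set (ZMod n)) (L : List (ZMod n)) : Prop :=
  ∃ a : List (ZMod n), a.length = L.length ∧ (∀ w ∈ a, w ∈ A) ∧
    (List.zipWith (· * ·) a L).sum = 0


lemma wzs_key (n p : ℕ) (hn : 0 < n) (hp : 0 < p) (hpn : p ∣ n)
    (A' : Set (ZMod (n / p))) (A : Set (ZMod n))
    (hAA : ∀ x ∈ A', ∃ b ∈ A,
      (ZMod.castHom (Nat.div_dvd_of_dvd hpn) (ZMod (n / p))) b = x)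
    (S' : List (ZMod (n / p))) (h : IsWeightedZeroSum A' S') :
    IsWeightedZeroSum A (S'.map fun y => (p : ZMod n) * (y.val : ZMod n)) := by
  classical
  haveI : NeZero n := ⟨hn.ne'⟩
  have hn' : 0 < n / p := Nat.div_pos (Nat.le_of_dvd hn hpn) hp
  haveI : NeZero (n / p) := ⟨hn'.ne'⟩
  have hnp : p * (n / p) = n := Nat.mul_div_cancel' hpn
  obtain ⟨a, hlen, hmem, hsum⟩ := h
  set φ := ZMod.castHom (Nat.div_dvd_of_dvd hpn) (ZMod (n / p)) with hφ
  set g : ZMod (n / p) → ZMod n := fun z => (p : ZMod n) * (z.val : ZMod n) with hg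
  -- mod reduction under multiplication by p
  have gmod : ∀ m : ℕ, (p : ZMod n) * ((m % (n / p) : ℕ) : ZMod n)
      = (p : ZMod n) * (m : ZMod n) := by
    intro m
    have h2 : p * m = p * (m % (n / p)) + n * (m / (n / p)) := by
      calc p * m = p * (m % (n / p) + (n / p) * (m / (n / p))) := by rw [Nat.mod_add_div]
        _ = p * (m % (n / p)) + n * (m / (n / p)) := by rw [Nat.mul_add, ← Nat.mul_assoc, hnp]
    have h3 := congrArg (Nat.cast : ℕ → ZMod n) h2
    push_cast at h3
    simp only [ZMod.natCast_self, zero_mul, add_zero] at h3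
    exact h3.symm
  have hg0 : g 0 = 0 := by simp [hg]
  have hgadd : ∀ y z : ZMod (n / p), g (y + z) = g y + g z := by
    intro y z
    simp only [hg, ZMod.val_add, gmod]
    push_cast
    ring
  have hgmul : ∀ (b : ZMod n) (y : ZMod (n / p)), b * g y = g (φ b * y) := by
    intro b y
    have h1 : φ b = ((b.val : ℕ) : ZMod (n / p)) := by
      simp [hφ, ZMod.natCast_val]
    simp only [hg]
    rw [ZMod.val_mul, gmod, h1, ZMod.val_natCast]
    push_cast
    conv_rhs => rw [← mul_assoc, gmod]
    simp only [ZMod.natCast_val, ZMod.cast_id]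
    ring
  let f : ZMod (n / p) → ZMod n := fun x =>
    if hx : x ∈ A' then (hAA x hx).choose else 1
  have hfA : ∀ x ∈ A', f x ∈ A := fun x hx => by
    simp only [f, dif_pos hx]; exact (hAA x hx).choose_spec.1
  have hfφ : ∀ x ∈ A', φ (f x) = x := fun x hx => by
    simp only [f, dif_pos hx]; exact (hAA x hx).choose_spec.2
  refine ⟨a.map f, by simp [hlen], ?_, ?_⟩
  · intro w hw
    obtain ⟨x, hx, rfl⟩ := List.mem_map.mp hw
    exact hfA x (hmem x hx)
  · have key : ∀ (a L : List (ZMod (n / p))), (∀ w ∈ a, w ∈ A') →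
        (List.zipWith (· * ·) (a.map f) (L.map g)).sum
          = g (List.zipWith (· * ·) a L).sum := by
      intro a
      induction a with
      | nil => intro L _; simpa using hg0.symm
      | cons w a ih =>
        intro L hm
        cases L with
        | nil => simpa using hg0.symm
        | cons y L =>
          have hw : w ∈ A' := hm w List.mem_cons_self
          have ih' := ih L (fun x hx => hm x (List.mem_cons_of_mem _ hx))
          simp only [List.map_cons, List.zipWith_cons_cons, List.sum_cons, ih',
            hgmul, hfφ w hw, hgadd]
    rw [key a S' hmem, hsum, hg0]


/-- Let `p` be a prime divisor of `n` and `n' = n / p`. If every term of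
`S` is obtained from the corresponding term of `S'` (a sequence over `Z_{n'}`) via the
map `y + n'Z ↦ py + nZ`, then: if `S'` is a `U(n')`-weighted zero-sum sequence so is `S`
a `U(n)`-weighted one, and if `S'` is a `U(n')²`-weighted zero-sum sequence so is `S` a
`U(n)²`-weighted one. -/
theorem wzs_of_divided_sequence (n p : ℕ) (hn : 0 < n) (hp : p.Prime) (hpn : p ∣ n)
    (S : List (ZMod n)) (S' : List (ZMod (n / p)))
    (hS : S = S'.map fun y => (p : ZMod n) * (y.val : ZMod n)) :
    (IsWeightedZeroSum {x : ZMod (n / p) | IsUnit x} S' →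
      IsWeightedZeroSum {x : ZMod n | IsUnit x} S) ∧
    (IsWeightedZeroSum {x : ZMod (n / p) | ∃ u : (ZMod (n / p))ˣ, (u : ZMod (n / p)) ^ 2 = x} S' →
      IsWeightedZeroSum {x : ZMod n | ∃ u : (ZMod n)ˣ, (u : ZMod n) ^ 2 = x} S) := by
  haveI : NeZero n := ⟨hn.ne'⟩
  have hd := Nat.div_dvd_of_dvd hpn
  subst hS
  constructor
  · refine fun h => wzs_key n p hn hp.pos hpn _ _ ?_ S' h
    intro x hx
    obtain ⟨v, hv⟩ := ZMod.unitsMap_surjective hd hx.unit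
    refine ⟨(v : ZMod n), v.isUnit, ?_⟩
    have : ((ZMod.unitsMap hd v : (ZMod (n / p))ˣ) : ZMod (n / p))
        = (ZMod.castHom hd (ZMod (n / p))) (v : ZMod n) := rfl
    rw [← this, hv, IsUnit.unit_spec]
  · refine fun h => wzs_key n p hn hp.pos hpn _ _ ?_ S' h
    rintro x ⟨u, rfl⟩
    obtain ⟨v, hv⟩ := ZMod.unitsMap_surjective hd u
    refine ⟨(v : ZMod n) ^ 2, ⟨v, rfl⟩, ?_⟩
    have : ((ZMod.unitsMap hd v : (ZMod (n / p))ˣ) : ZMod (n / p))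
        = (ZMod.castHom hd (ZMod (n / p))) (v : ZMod n) := rfl
    rw [map_pow, ← this, hv]
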